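/- The conditional probability that W observes w = ok given that W̄ announced w̄ = ok̄ equals 1/2: with v_ok̄ok = T(ok̄, ok) and ok̄ = (1/√2)(f₀ − f₁), ok = (1/√2)(f₁ − f₀), one has ‖⟪v_ok̄ok, Ψ₂⟫‖² / (‖⟪T(ok̄, f₀), Ψ₂⟫‖² + ‖⟪T(ok̄, f₁), Ψ₂⟫‖²) = 1/2. In particular this conditional probability is nonzero, so no contradiction arises between W's knowledge of w̄ = ok̄ and his observing w = ok. -/

import Mathlib

noncomputable def Psi2 : EuclideanSpace ℂ (Fin 2 × Fin 2) :=
  ((1 / Real.sqrt 3 : ℝ) : ℂ) •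
    (EuclideanSpace.single (0, 1) 1 + EuclideanSpace.single (1, 0) 1 +
      EuclideanSpace.single (1, 1) 1)

/-- Coordinatewise tensor product of two qubit vectors. -/
noncomputable def T (w u : EuclideanSpace ℂ (Fin 2)) :
    EuclideanSpace ℂ (Fin 2 × Fin 2) :=
  (WithLp.equiv 2 (Fin 2 × Fin 2 → ℂ)).symm fun p => w p.1 * u p.2

noncomputable def okbar : EuclideanSpace ℂ (Fin 2) :=
  ((1 / Real.sqrt 2 : ℝ) : ℂ) •
    (EuclideanSpace.single 0 1 - EuclideanSpace.single 1 1)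

noncomputable def okVec : EuclideanSpace ℂ (Fin 2) :=
  ((1 / Real.sqrt 2 : ℝ) : ℂ) •
    (EuclideanSpace.single 1 1 - EuclideanSpace.single 0 1)

theorem conditional_prob_ok_given_okbar :
    ‖(inner ℂ (T okbar okVec) Psi2 : ℂ)‖ ^ 2 /
      (‖(inner ℂ (T okbar (EuclideanSpace.single 0 1)) Psi2 : ℂ)‖ ^ 2 +
        ‖(inner ℂ (T okbar (EuclideanSpace.single 1 1)) Psi2 : ℂ)‖ ^ 2) = 1 / 2 := by
  have h2 : (0:ℝ) < Real.sqrt 2 := Real.sqrt_pos.2 (by norm_num)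
  have h3 : (0:ℝ) < Real.sqrt 3 := Real.sqrt_pos.2 (by norm_num)
  have e2 : Real.sqrt 2 ^ 2 = 2 := Real.sq_sqrt (by norm_num)
  have e3 : Real.sqrt 3 ^ 2 = 3 := Real.sq_sqrt (by norm_num)
  simp only [Psi2, T, okbar, okVec, PiLp.inner_apply, Fintype.sum_prod_type,
    Fin.sum_univ_two, WithLp.equiv_symm_apply, PiLp.toLp_apply, PiLp.smul_apply, PiLp.add_apply,
    PiLp.sub_apply, EuclideanSpace.single_apply, smul_eq_mul]
  norm_num [Complex.ext_iff, Prod.ext_iff, map_mul,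
    Complex.sq_norm, Complex.normSq_apply, Complex.ofReal_mul]
  rw [div_eq_iff]
  · rw [abs_of_pos h2, abs_of_pos h3, mul_pow, mul_pow, mul_pow,
      show ((Real.sqrt 2)⁻¹) ^ 2 = 1 / 2 from by rw [inv_pow, e2]; norm_num]
    ring
  · positivity
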